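/- Let H be a flag-no-square simple graph with vertex set V, let Y be any set, and let α : Y → V be any map. Define the thickened graph Γ_α on vertex set Y by declaring distinct y, y' ∈ Y adjacent if and only if α(y) = α(y') or α(y) is adjacent to α(y') in H. Then Γ_α is flag-no-square: for any four distinct vertices y₁, y₂, y₃, y₄ of Γ_α with y₁ adjacent to y₂, y₂ to y₃, y₃ to y₄, and y₄ to y₁, either y₁ is adjacent to y₃ or y₂ is adjacent to y₄. -/

import Mathlib

/-- A simple graph is *flag-no-square* if for any four distinct vertices `v₁ v₂ v₃ v₄`
forming a 4-cycle (`v₁ ~ v₂ ~ v₃ ~ v₄ ~ v₁`), one of the diagonals is present.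
(The distinctness conditions `v₁ ≠ v₂`, `v₂ ≠ v₃`, `v₃ ≠ v₄`, `v₄ ≠ v₁` are automatic
from adjacency in a simple graph.) -/
def FlagNoSquare {V : Type*} (G : SimpleGraph V) : Prop :=
  ∀ v₁ v₂ v₃ v₄ : V, v₁ ≠ v₃ → v₂ ≠ v₄ →
    G.Adj v₁ v₂ → G.Adj v₂ v₃ → G.Adj v₃ v₄ → G.Adj v₄ v₁ →
    G.Adj v₁ v₃ ∨ G.Adj v₂ v₄

/-- The thickened graph `Γ_α` on vertex set `Y` associated to a map `α : Y → V` and a graph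
`H` on `V`: distinct `y, y'` are adjacent iff `α y = α y'` or `α y` is adjacent to `α y'`
in `H`. -/
def thickening {V Y : Type*} (H : SimpleGraph V) (α : Y → V) : SimpleGraph Y where
  Adj y y' := y ≠ y' ∧ (α y = α y' ∨ H.Adj (α y) (α y'))
  symm := by
    constructor
    rintro y y' ⟨h₁, h₂⟩
    refine ⟨h₁.symm, ?_⟩
    rcases h₂ with h | h
    · exact Or.inl h.symm
    · exact Or.inr h.symm
  loopless := by constructor; rintro y ⟨h₁, -⟩; exact h₁ rfl

/-- If `H` is a flag-no-square simple graph, `Y` is any set and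
`α : Y → V` is any map, then the thickened graph `Γ_α` is flag-no-square. -/
theorem thickening_flagNoSquare {V Y : Type*} (H : SimpleGraph V) (hH : FlagNoSquare H)
    (α : Y → V) : FlagNoSquare (thickening H α) := by
  rintro y₁ y₂ y₃ y₄ h13 h24 ⟨n12, e12⟩ ⟨n23, e23⟩ ⟨n34, e34⟩ ⟨n41, e41⟩
  rcases e12 with q12 | a12
  · left; exact ⟨h13, q12 ▸ e23⟩
  rcases e23 with q23 | a23
  · left; exact ⟨h13, Or.inr (q23 ▸ a12)⟩
  rcases e34 with q34 | a34
  · right; exact ⟨h24, Or.inr (q34 ▸ a23)⟩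
  rcases e41 with q41 | a41
  · left; exact ⟨h13, Or.inr ((q41 ▸ a34) : H.Adj (α y₃) (α y₁)).symm⟩
  by_cases hv13 : α y₁ = α y₃
  · left; exact ⟨h13, Or.inl hv13⟩
  by_cases hv24 : α y₂ = α y₄
  · right; exact ⟨h24, Or.inl hv24⟩
  rcases hH (α y₁) (α y₂) (α y₃) (α y₄) hv13 hv24 a12 a23 a34 a41 with h | h
  · left; exact ⟨h13, Or.inr h⟩
  · right; exact ⟨h24, Or.inr h⟩
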